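/- The expectation (over x₀ and n) of the ridge cost at the minimizer is an affine (linear with no constant term) function of the pair (σ_x², σ_n²): E[‖y − W x̂‖₂² + λ‖x̂‖₂²] = a(W,λ) σ_x² + b(W,λ) σ_n² for some coefficients depending only on W and λ, namely a = λ Tr(W W^T (W W^T + λ I_M)^{-1}) and b = λ Tr((W W^T + λ I_M)^{-1}). -/

import Mathlib

open Matrix MeasureTheory ProbabilityTheory

private lemma l2_mul_int {Ω : Type*} [MeasurableSpace Ω] {μ : Measure Ω}
    {f g : Ω → ℝ} (hf : MemLp f 2 μ) (hg : MemLp g 2 μ) :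
    Integrable (fun ω => f ω * g ω) μ := by
  have h2 : (1:ENNReal)/1 = 1/2 + 1/2 := by
    rw [ENNReal.div_add_div_same]
    norm_num
    rw [ENNReal.div_self] <;> norm_num
  have h : MemLp (f • g) 1 μ := hg.smul hf
  rw [← memLp_one_iff_integrable]
  exact h

private lemma dot_mulVec_mulVec {m p : Type*} [Fintype m] [Fintype p]
    (A C : Matrix p m ℝ) (v : m → ℝ) :
    A.mulVec v ⬝ᵥ C.mulVec v = v ⬝ᵥ (Aᵀ * C).mulVec v := by
  conv_rhs => rw [← Matrix.mulVec_mulVec, Matrix.dotProduct_mulVec, Matrix.vecMul_transpose]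

theorem stmt_6 {Ω : Type*} [MeasurableSpace Ω] (μ : Measure Ω) [IsProbabilityMeasure μ]
    {M K : ℕ} (W : Matrix (Fin M) (Fin K) ℝ)
    (x₀ : Ω → Fin K → ℝ) (n : Ω → Fin M → ℝ)
    (σx2 σn2 : ℝ)
    (hx_meas : Measurable x₀) (hn_meas : Measurable n)
    -- entries of x₀ are i.i.d. with mean 0 and variance σx2
    (hx_indep : iIndepFun (fun i ω => x₀ ω i) μ)
    (hx_ident : ∀ i j : Fin K, IdentDistrib (fun ω => x₀ ω i) (fun ω => x₀ ω j) μ μ)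
    (hx_L2 : ∀ i : Fin K, MemLp (fun ω => x₀ ω i) 2 μ)
    (hx_mean : ∀ i : Fin K, ∫ ω, x₀ ω i ∂μ = 0)
    (hx_var : ∀ i : Fin K, ∫ ω, (x₀ ω i) ^ 2 ∂μ = σx2)
    -- entries of n are i.i.d. with mean 0 and variance σn2
    (hn_indep : iIndepFun (fun i ω => n ω i) μ)
    (hn_ident : ∀ i j : Fin M, IdentDistrib (fun ω => n ω i) (fun ω => n ω j) μ μ)
    (hn_L2 : ∀ i : Fin M, MemLp (fun ω => n ω i) 2 μ)
    (hn_mean : ∀ i : Fin M, ∫ ω, n ω i ∂μ = 0)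
    (hn_var : ∀ i : Fin M, ∫ ω, (n ω i) ^ 2 ∂μ = σn2)
    -- x₀ and n are independent
    (hxn : IndepFun x₀ n μ)
    (lam : ℝ) (hlam : 0 < lam)
    (y : Ω → Fin M → ℝ) (hy : y = fun ω => W.mulVec (x₀ ω) + n ω)
    (xhat : Ω → Fin K → ℝ)
    (hxhat : xhat = fun ω =>
      ((Wᵀ * W + lam • (1 : Matrix (Fin K) (Fin K) ℝ))⁻¹ * Wᵀ).mulVec (y ω)) :
    ∃ a b : ℝ,
      a = lam * (W * Wᵀ * (W * Wᵀ + lam • (1 : Matrix (Fin M) (Fin M) ℝ))⁻¹).trace ∧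
      b = lam * ((W * Wᵀ + lam • (1 : Matrix (Fin M) (Fin M) ℝ))⁻¹).trace ∧
      ∫ ω, ((y ω - W.mulVec (xhat ω)) ⬝ᵥ (y ω - W.mulVec (xhat ω))
          + lam * (xhat ω ⬝ᵥ xhat ω)) ∂μ = a * σx2 + b * σn2 := by
  classical
  set T : Matrix (Fin M) (Fin M) ℝ := W * Wᵀ + lam • 1 with hTdef
  set S : Matrix (Fin K) (Fin K) ℝ := Wᵀ * W + lam • 1 with hSdef
  -- Positive definiteness and invertibility
  have hT_pd : T.PosDef := by
    apply Matrix.PosDef.posSemidef_add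
    · simpa [Matrix.conjTranspose_eq_transpose_of_trivial] using
        Matrix.posSemidef_self_mul_conjTranspose W
    · rw [Matrix.smul_one_eq_diagonal]
      exact Matrix.PosDef.diagonal (fun _ => hlam)
  have hS_pd : S.PosDef := by
    apply Matrix.PosDef.posSemidef_add
    · simpa [Matrix.conjTranspose_eq_transpose_of_trivial] using
        Matrix.posSemidef_conjTranspose_mul_self W
    · rw [Matrix.smul_one_eq_diagonal]
      exact Matrix.PosDef.diagonal (fun _ => hlam)
  have hTdet : IsUnit T.det := hT_pd.det_pos.ne'.isUnit
  have hSdet : IsUnit S.det := hS_pd.det_pos.ne'.isUnit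
  have hTT : T * T⁻¹ = 1 := Matrix.mul_nonsing_inv _ hTdet
  have hTT' : T⁻¹ * T = 1 := Matrix.nonsing_inv_mul _ hTdet
  have hSS : S⁻¹ * S = 1 := Matrix.nonsing_inv_mul _ hSdet
  have hTsymm : Tᵀ = T := by
    rw [hTdef]
    simp [Matrix.transpose_add, Matrix.transpose_mul, Matrix.transpose_smul]
  have hTinv_symm : T⁻¹ᵀ = T⁻¹ := by rw [Matrix.transpose_nonsing_inv, hTsymm]
  -- push-through identity
  have h1 : Wᵀ * T = S * Wᵀ := by
    rw [hTdef, hSdef]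
    simp only [Matrix.mul_add, Matrix.add_mul, Matrix.mul_smul, Matrix.smul_mul,
      Matrix.mul_one, Matrix.one_mul, Matrix.mul_assoc]
  have hpush : S⁻¹ * Wᵀ = Wᵀ * T⁻¹ := by
    calc S⁻¹ * Wᵀ = S⁻¹ * (Wᵀ * (T * T⁻¹)) := by rw [hTT, Matrix.mul_one]
      _ = S⁻¹ * (S * (Wᵀ * T⁻¹)) := by
          rw [← Matrix.mul_assoc Wᵀ T T⁻¹, h1, Matrix.mul_assoc]
      _ = Wᵀ * T⁻¹ := by rw [← Matrix.mul_assoc, hSS, Matrix.one_mul]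
  have hres : (1 : Matrix (Fin M) (Fin M) ℝ) - W * Wᵀ * T⁻¹ = lam • T⁻¹ := by
    rw [← hTT, ← Matrix.sub_mul]
    have h2 : T - W * Wᵀ = lam • 1 := by rw [hTdef]; exact add_sub_cancel_left _ _
    rw [h2, Matrix.smul_mul, Matrix.one_mul]
  -- key matrix identity for the cost at the minimizer
  have hkey : (lam • T⁻¹)ᵀ * (lam • T⁻¹) + lam • ((Wᵀ * T⁻¹)ᵀ * (Wᵀ * T⁻¹)) = lam • T⁻¹ := by
    have hBt : (Wᵀ * T⁻¹)ᵀ = T⁻¹ * W := by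
      rw [Matrix.transpose_mul, Matrix.transpose_transpose, hTinv_symm]
    have hexp : T⁻¹ * (W * Wᵀ) * T⁻¹ + lam • (T⁻¹ * T⁻¹) = T⁻¹ := by
      have h3 : T⁻¹ * T * T⁻¹ = T⁻¹ := by rw [hTT', Matrix.one_mul]
      calc T⁻¹ * (W * Wᵀ) * T⁻¹ + lam • (T⁻¹ * T⁻¹)
          = T⁻¹ * (W * Wᵀ + lam • 1) * T⁻¹ := by
            simp only [Matrix.mul_add, Matrix.add_mul, Matrix.mul_smul, Matrix.smul_mul,
              Matrix.mul_one]
        _ = T⁻¹ := by rw [← hTdef, h3]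
    rw [Matrix.transpose_smul, hTinv_symm, hBt]
    calc (lam • T⁻¹) * (lam • T⁻¹) + lam • (T⁻¹ * W * (Wᵀ * T⁻¹))
        = lam • (lam • (T⁻¹ * T⁻¹)) + lam • (T⁻¹ * (W * Wᵀ) * T⁻¹) := by
          simp only [Matrix.smul_mul, Matrix.mul_smul, Matrix.mul_assoc, smul_smul]
      _ = lam • (T⁻¹ * (W * Wᵀ) * T⁻¹ + lam • (T⁻¹ * T⁻¹)) := by
          rw [smul_add]
          abel
      _ = lam • T⁻¹ := by rw [hexp]
  -- pointwise value of the cost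
  have hcost : ∀ v : Fin M → ℝ,
      (v - W.mulVec ((S⁻¹ * Wᵀ).mulVec v)) ⬝ᵥ (v - W.mulVec ((S⁻¹ * Wᵀ).mulVec v))
        + lam * ((S⁻¹ * Wᵀ).mulVec v ⬝ᵥ (S⁻¹ * Wᵀ).mulVec v)
      = lam * (v ⬝ᵥ T⁻¹.mulVec v) := by
    intro v
    have h4 : v - W.mulVec ((S⁻¹ * Wᵀ).mulVec v) = (lam • T⁻¹).mulVec v := by
      rw [hpush, Matrix.mulVec_mulVec, ← hres, Matrix.sub_mulVec, Matrix.one_mulVec,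
        Matrix.mul_assoc]
    rw [h4, hpush, dot_mulVec_mulVec, dot_mulVec_mulVec]
    conv_rhs => rw [← smul_eq_mul, ← dotProduct_smul, ← Matrix.smul_mulVec, ← hkey]
    rw [Matrix.add_mulVec, dotProduct_add, Matrix.smul_mulVec,
      dotProduct_smul, smul_eq_mul]
  -- second moments
  have hExx : ∀ k l : Fin K, ∫ ω, x₀ ω k * x₀ ω l ∂μ = if k = l then σx2 else 0 := by
    intro k l
    by_cases h : k = l
    · subst h
      rw [if_pos rfl, ← hx_var k]
      simp_rw [pow_two]
    · rw [if_neg h]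
      have hind : IndepFun (fun ω => x₀ ω k) (fun ω => x₀ ω l) μ := hx_indep.indepFun h
      have h0 := hind.integral_mul_eq_mul_integral (hx_L2 k).1 (hx_L2 l).1
      rw [Pi.mul_def] at h0
      rw [h0, hx_mean k, hx_mean l, mul_zero]
  have hEnn : ∀ k l : Fin M, ∫ ω, n ω k * n ω l ∂μ = if k = l then σn2 else 0 := by
    intro k l
    by_cases h : k = l
    · subst h
      rw [if_pos rfl, ← hn_var k]
      simp_rw [pow_two]
    · rw [if_neg h]
      have hind : IndepFun (fun ω => n ω k) (fun ω => n ω l) μ := hn_indep.indepFun h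
      have h0 := hind.integral_mul_eq_mul_integral (hn_L2 k).1 (hn_L2 l).1
      rw [Pi.mul_def] at h0
      rw [h0, hn_mean k, hn_mean l, mul_zero]
  have hExn : ∀ (k : Fin K) (j : Fin M), ∫ ω, x₀ ω k * n ω j ∂μ = 0 := by
    intro k j
    have hind : IndepFun (fun ω => x₀ ω k) (fun ω => n ω j) μ :=
      hxn.comp (measurable_pi_apply k) (measurable_pi_apply j)
    have h0 := hind.integral_mul_eq_mul_integral (hx_L2 k).1 (hn_L2 j).1
    rw [Pi.mul_def] at h0
    rw [h0, hx_mean k, hn_mean j, mul_zero]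
  have hA_L2 : ∀ i : Fin M, MemLp (fun ω => ∑ k, W i k * x₀ ω k) 2 μ := by
    intro i
    exact memLp_finset_sum _ (fun k _ => (hx_L2 k).const_mul (W i k))
  have hyL2 : ∀ i : Fin M, MemLp (fun ω => y ω i) 2 μ := by
    intro i
    have h1 : (fun ω => y ω i) = fun ω => (∑ k, W i k * x₀ ω k) + n ω i := by
      funext ω; rw [hy]; simp [Matrix.mulVec, dotProduct]
    rw [h1]
    exact (hA_L2 i).add (hn_L2 i)
  have hEyy : ∀ i j : Fin M, ∫ ω, y ω i * y ω j ∂μ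
      = σx2 * (W * Wᵀ) i j + (if i = j then σn2 else 0) := by
    intro i j
    have hAA : ∫ ω, (∑ k, W i k * x₀ ω k) * (∑ l, W j l * x₀ ω l) ∂μ
        = σx2 * (W * Wᵀ) i j := by
      have h1 : ∀ ω, (∑ k, W i k * x₀ ω k) * (∑ l, W j l * x₀ ω l)
          = ∑ k, ∑ l, (W i k * W j l) * (x₀ ω k * x₀ ω l) := by
        intro ω
        rw [Finset.sum_mul_sum]
        exact Finset.sum_congr rfl fun k _ => Finset.sum_congr rfl fun l _ => by ring
      simp_rw [h1]
      rw [integral_finset_sum _ (fun k _ => integrable_finset_sum _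
        (fun l _ => (l2_mul_int (hx_L2 k) (hx_L2 l)).const_mul _))]
      have h2 : ∀ k, ∫ ω, ∑ l, (W i k * W j l) * (x₀ ω k * x₀ ω l) ∂μ
          = ∑ l, (W i k * W j l) * ∫ ω, x₀ ω k * x₀ ω l ∂μ := by
        intro k
        rw [integral_finset_sum _ (fun l _ => (l2_mul_int (hx_L2 k) (hx_L2 l)).const_mul _)]
        exact Finset.sum_congr rfl fun l _ => integral_const_mul _ _
      simp_rw [h2, hExx, mul_ite, mul_zero, Finset.sum_ite_eq, Finset.mem_univ, if_true]
      rw [Matrix.mul_apply, Finset.mul_sum]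
      exact Finset.sum_congr rfl fun k _ => by rw [Matrix.transpose_apply]; ring
    have hAn : ∫ ω, (∑ k, W i k * x₀ ω k) * n ω j ∂μ = 0 := by
      have h1 : ∀ ω, (∑ k, W i k * x₀ ω k) * n ω j = ∑ k, W i k * (x₀ ω k * n ω j) := by
        intro ω; rw [Finset.sum_mul]; exact Finset.sum_congr rfl fun k _ => by ring
      simp_rw [h1]
      rw [integral_finset_sum _ (fun k _ => (l2_mul_int (hx_L2 k) (hn_L2 j)).const_mul _)]
      simp_rw [integral_const_mul, hExn, mul_zero, Finset.sum_const_zero]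
    have hnA : ∫ ω, n ω i * (∑ l, W j l * x₀ ω l) ∂μ = 0 := by
      have h1 : ∀ ω, n ω i * (∑ l, W j l * x₀ ω l) = ∑ l, W j l * (x₀ ω l * n ω i) := by
        intro ω; rw [Finset.mul_sum]; exact Finset.sum_congr rfl fun l _ => by ring
      simp_rw [h1]
      rw [integral_finset_sum _ (fun l _ => (l2_mul_int (hx_L2 l) (hn_L2 i)).const_mul _)]
      simp_rw [integral_const_mul, hExn, mul_zero, Finset.sum_const_zero]
    have hsplit : ∀ ω, y ω i * y ω j
        = (∑ k, W i k * x₀ ω k) * (∑ l, W j l * x₀ ω l)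
          + ((∑ k, W i k * x₀ ω k) * n ω j
          + (n ω i * (∑ l, W j l * x₀ ω l) + n ω i * n ω j)) := by
      intro ω
      rw [hy]
      simp only [Pi.add_apply, Matrix.mulVec, dotProduct]
      ring
    have I34 : Integrable (fun ω => n ω i * (∑ l, W j l * x₀ ω l) + n ω i * n ω j) μ :=
      (l2_mul_int (hn_L2 i) (hA_L2 j)).add (l2_mul_int (hn_L2 i) (hn_L2 j))
    have I234 : Integrable (fun ω => (∑ k, W i k * x₀ ω k) * n ω j
        + (n ω i * (∑ l, W j l * x₀ ω l) + n ω i * n ω j)) μ :=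
      (l2_mul_int (hA_L2 i) (hn_L2 j)).add I34
    simp_rw [hsplit]
    rw [integral_add (l2_mul_int (hA_L2 i) (hA_L2 j)) I234,
      integral_add (l2_mul_int (hA_L2 i) (hn_L2 j)) I34,
      integral_add (l2_mul_int (hn_L2 i) (hA_L2 j)) (l2_mul_int (hn_L2 i) (hn_L2 j)),
      hAA, hAn, hnA, hEnn, zero_add, zero_add]
  -- assemble
  refine ⟨lam * (W * Wᵀ * T⁻¹).trace, lam * T⁻¹.trace, rfl, rfl, ?_⟩
  have hptw : ∀ ω, (y ω - W.mulVec (xhat ω)) ⬝ᵥ (y ω - W.mulVec (xhat ω))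
      + lam * (xhat ω ⬝ᵥ xhat ω) = lam * (y ω ⬝ᵥ T⁻¹.mulVec (y ω)) := by
    intro ω
    simp only [hxhat]
    exact hcost (y ω)
  have hdp : ∀ v : Fin M → ℝ, v ⬝ᵥ T⁻¹.mulVec v = ∑ i, ∑ j, T⁻¹ i j * (v i * v j) := by
    intro v
    simp only [dotProduct, Matrix.mulVec, Finset.mul_sum]
    exact Finset.sum_congr rfl fun i _ => Finset.sum_congr rfl fun j _ => by ring
  simp_rw [hptw, hdp]
  rw [integral_const_mul, integral_finset_sum _ (fun i _ => integrable_finset_sum _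
    (fun j _ => ((l2_mul_int (hyL2 i) (hyL2 j)).const_mul (T⁻¹ i j))))]
  have h5 : ∀ i, ∫ ω, ∑ j, T⁻¹ i j * (y ω i * y ω j) ∂μ
      = ∑ j, T⁻¹ i j * ∫ ω, y ω i * y ω j ∂μ := by
    intro i
    rw [integral_finset_sum _ (fun j _ => (l2_mul_int (hyL2 i) (hyL2 j)).const_mul _)]
    exact Finset.sum_congr rfl fun j _ => integral_const_mul _ _
  simp_rw [h5, hEyy]
  have hTinv_entry : ∀ i j, T⁻¹ j i = T⁻¹ i j := by
    intro i j
    have h := congrFun (congrFun hTinv_symm i) j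
    rwa [Matrix.transpose_apply] at h
  have h6 : ∀ i, ∑ j, T⁻¹ i j * (σx2 * (W * Wᵀ) i j + if i = j then σn2 else 0)
      = (∑ j, (W * Wᵀ) i j * T⁻¹ j i) * σx2 + T⁻¹ i i * σn2 := by
    intro i
    simp_rw [mul_add]
    rw [Finset.sum_add_distrib]
    congr 1
    · rw [Finset.sum_mul]
      exact Finset.sum_congr rfl fun j _ => by rw [hTinv_entry i j]; ring
    · simp_rw [mul_ite, mul_zero]
      rw [Finset.sum_ite_eq, if_pos (Finset.mem_univ i)]
  simp_rw [h6]
  rw [Finset.sum_add_distrib, ← Finset.sum_mul, ← Finset.sum_mul]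
  have htr1 : (W * Wᵀ * T⁻¹).trace = ∑ i, ∑ j, (W * Wᵀ) i j * T⁻¹ j i := by
    simp [Matrix.trace, Matrix.diag, Matrix.mul_apply]
  have htr2 : T⁻¹.trace = ∑ i, T⁻¹ i i := by
    simp [Matrix.trace, Matrix.diag]
  rw [htr1, htr2]
  ring
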